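/- For every formula φ of basic multi-agent modal logic, the formula [↑]φ (after all arrow update models, φ) is equivalent to [⊗]φ (after all action models, φ): M,s ⊨ [↑]φ iff M,s ⊨ [⊗]φ for every pointed relational model (M,s). -/

import Mathlib

namespace AAUML

/-- Formulas of arbitrary arrow update model logic over atoms `P` and agents `A`.
An arrow update model is encoded as a finite list of arrows
`(agent, source outcome, source condition, target outcome, target condition)`,
with outcomes drawn from `ℕ`; `upd U o φ` is `[U,o]φ` and `all φ` is `[↑]φ`. -/
inductive Form (P A : Type) : Type where
  | atom : P → Form P A
  | neg  : Form P A → Form P A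
  | and  : Form P A → Form P A → Form P A
  | box  : A → Form P A → Form P A
  | upd  : List (A × ℕ × Form P A × ℕ × Form P A) → ℕ → Form P A → Form P A
  | all  : Form P A → Form P A

/-- An arrow: agent, source outcome, source condition, target outcome, target condition. -/
abbrev Arrow (P A : Type) := A × ℕ × Form P A × ℕ × Form P A

/-- Formulas of basic multi-agent modal logic: no update modality, no quantifier. -/
inductive Form.Modal {P A : Type} : Form P A → Prop
  | atom (p : P) : Form.Modal (.atom p)
  | neg {φ : Form P A} : Form.Modal φ → Form.Modal (.neg φ)
  | and {φ ψ : Form P A} : Form.Modal φ → Form.Modal ψ → Form.Modal (.and φ ψ)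
  | box (a : A) {φ : Form P A} : Form.Modal φ → Form.Modal (.box a φ)

/-- Formulas of arrow update model logic (no arbitrary-update quantifier anywhere,
including inside the conditions of arrow update models). -/
inductive Form.NoQuant {P A : Type} : Form P A → Prop
  | atom (p : P) : Form.NoQuant (.atom p)
  | neg {φ : Form P A} : Form.NoQuant φ → Form.NoQuant (.neg φ)
  | and {φ ψ : Form P A} : Form.NoQuant φ → Form.NoQuant ψ → Form.NoQuant (.and φ ψ)
  | box (a : A) {φ : Form P A} : Form.NoQuant φ → Form.NoQuant (.box a φ)
  | upd {U : List (Arrow P A)} (o : ℕ) {φ : Form P A} : Form.NoQuant φ →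
      (∀ ar ∈ U, Form.NoQuant ar.2.2.1) → (∀ ar ∈ U, Form.NoQuant ar.2.2.2.2) →
      Form.NoQuant (.upd U o φ)

/-- Propositional formulas (no modalities at all). -/
inductive Form.Prp {P A : Type} : Form P A → Prop
  | atom (p : P) : Form.Prp (.atom p)
  | neg {φ : Form P A} : Form.Prp φ → Form.Prp (.neg φ)
  | and {φ ψ : Form P A} : Form.Prp φ → Form.Prp ψ → Form.Prp (.and φ ψ)

/-- A relational (Kripke) model. -/
structure KModel (P A : Type) : Type 1 where
  World : Type
  R : A → World → World → Prop
  V : World → P → Prop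

variable {P A : Type}

/-- Satisfaction for basic modal formulas (junk value `False` on updates/quantifiers;
only used on modal formulas). -/
def msat (M : KModel P A) : M.World → Form P A → Prop
  | s, .atom p => M.V s p
  | s, .neg φ => ¬ msat M s φ
  | s, .and φ ψ => msat M s φ ∧ msat M s ψ
  | s, .box a φ => ∀ t, M.R a s t → msat M t φ
  | _, .upd _ _ _ => False
  | _, .all _ => False

/-- Some arrow of `U` for agent `a` from outcome `o` to outcome `o'` has its (modal)
source condition true at `s` and its target condition true at `s'`. -/
def marrowOK (M : KModel P A) (U : List (Arrow P A)) (a : A) (o o' : ℕ)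
    (s s' : M.World) : Prop :=
  ∃ ψ ψ', (a, o, ψ, o', ψ') ∈ U ∧ msat M s ψ ∧ msat M s' ψ'

/-- All source and target conditions of `U` are basic modal formulas. -/
def ModalArrows (U : List (Arrow P A)) : Prop :=
  ∀ ar ∈ U, Form.Modal ar.2.2.1 ∧ Form.Modal ar.2.2.2.2

mutual
  /-- Satisfaction `M,s ⊨ φ`.  The case `upd U o φ` is interpreted in the product
  model `M*U` (inlined); `all φ` quantifies over all arrow update models with basic
  modal source and target conditions. -/
  def Form.sat : (M : KModel P A) → M.World → Form P A → Prop
    | M, s, .atom p => M.V s p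
    | M, s, .neg φ => ¬ Form.sat M s φ
    | M, s, .and φ ψ => Form.sat M s φ ∧ Form.sat M s ψ
    | M, s, .box a φ => ∀ t, M.R a s t → Form.sat M t φ
    | M, s, .upd U o φ =>
        Form.sat ⟨M.World × ℕ,
          fun a x y => M.R a x.1 y.1 ∧ satList M U a x.2 y.2 x.1 y.1,
          fun x p => M.V x.1 p⟩ (s, o) φ
    | M, s, .all φ => ∀ (U : List (Arrow P A)) (o : ℕ), ModalArrows U →
        Form.sat ⟨M.World × ℕ,
          fun a x y => M.R a x.1 y.1 ∧ marrowOK M U a x.2 y.2 x.1 y.1,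
          fun x p => M.V x.1 p⟩ (s, o) φ
  termination_by M s φ => sizeOf φ

  /-- Some arrow of the list, for agent `a`, from `o` to `o'`, has its source condition
  true at `s` and its target condition true at `s'`. -/
  def satList : (M : KModel P A) → List (Arrow P A) → A → ℕ → ℕ → M.World → M.World → Prop
    | _, [], _, _, _, _, _ => False
    | M, (b, o1, ψ, o2, ψ') :: rest, a, o, o', s, s' =>
        (b = a ∧ o1 = o ∧ o2 = o' ∧ Form.sat M s ψ ∧ Form.sat M s' ψ') ∨
        satList M rest a o o' s s'
  termination_by M U a o o' s s' => sizeOf U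
end

/-- The product `M*U` of a relational model and an arrow update model. -/
def prodModel (M : KModel P A) (U : List (Arrow P A)) : KModel P A :=
  ⟨M.World × ℕ,
   fun a x y => M.R a x.1 y.1 ∧ satList M U a x.2 y.2 x.1 y.1,
   fun x p => M.V x.1 p⟩

def Valid (φ : Form P A) : Prop := ∀ (M : KModel P A) (s : M.World), Form.sat M s φ

def Form.or (φ ψ : Form P A) : Form P A := .neg (.and (.neg φ) (.neg ψ))
def Form.imp (φ ψ : Form P A) : Form P A := .neg (.and φ (.neg ψ))
def Form.dia (a : A) (φ : Form P A) : Form P A := .neg (.box a (.neg φ))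
/-- `⟨U,o⟩φ` -/
def Form.diaUpd (U : List (Arrow P A)) (o : ℕ) (φ : Form P A) : Form P A :=
  .neg (.upd U o (.neg φ))
/-- `⟨↑⟩φ` -/
def Form.ex (φ : Form P A) : Form P A := .neg (.all (.neg φ))
/-- A canonical tautology. -/
def Form.top [Inhabited P] : Form P A := .neg (.and (.atom default) (.neg (.atom default)))
/-- Finite conjunction. -/
def Form.conj [Inhabited P] : List (Form P A) → Form P A
  | [] => Form.top
  | φ :: rest => .and φ (Form.conj rest)

/-- `Z` is a bisimulation between `M` and `N`. -/
def IsBisim (M N : KModel P A) (Z : M.World → N.World → Prop) : Prop :=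
  ∀ s s', Z s s' →
    (∀ p, M.V s p ↔ N.V s' p) ∧
    (∀ a t, M.R a s t → ∃ t', N.R a s' t' ∧ Z t t') ∧
    (∀ a t', N.R a s' t' → ∃ t, M.R a s t ∧ Z t t')

/-- Bisimilarity of pointed models. -/
def Bisimilar (M : KModel P A) (s : M.World) (N : KModel P A) (s' : N.World) : Prop :=
  ∃ Z, IsBisim M N Z ∧ Z s s'

/-- An action model: actions with accessibility relations and preconditions. -/
structure AModel (P A : Type) : Type 1 where
  Action : Type
  rel : A → Action → Action → Prop
  pre : Action → Form P A

/-- The restricted modal product `M ⊗ E`. -/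
def actProd (M : KModel P A) (E : AModel P A) : KModel P A :=
  ⟨{x : M.World × E.Action // Form.sat M x.1 (E.pre x.2)},
   fun a x y => M.R a x.1.1 y.1.1 ∧ E.rel a x.1.2 y.1.2,
   fun x p => M.V x.1.1 p⟩

/-- `M,s ⊨ [E,e]φ`: if the precondition of `e` holds at `s` then `φ` holds at `(s,e)`
in `M ⊗ E`. -/
def actSat (M : KModel P A) (E : AModel P A) (s : M.World) (e : E.Action)
    (φ : Form P A) : Prop :=
  ∀ h : Form.sat M s (E.pre e), Form.sat (actProd M E) ⟨(s, e), h⟩ φ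


/-! ### Auxiliary machinery for the proof -/

/-- Modal formulas whose box-agents all lie in `S`. -/
inductive ModalS (S : A → Prop) : Form P A → Prop
  | atom (p : P) : ModalS S (.atom p)
  | neg {φ : Form P A} : ModalS S φ → ModalS S (.neg φ)
  | and {φ ψ : Form P A} : ModalS S φ → ModalS S ψ → ModalS S (.and φ ψ)
  | box {a : A} {φ : Form P A} : S a → ModalS S φ → ModalS S (.box a φ)

/-- Agents occurring in a formula (boxes only). -/
def ags : Form P A → List A
  | .atom _ => []
  | .neg φ => ags φ
  | .and φ ψ => ags φ ++ ags ψ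
  | .box a φ => a :: ags φ
  | .upd _ _ _ => []
  | .all _ => []

lemma ModalS.mono {S S' : A → Prop} (h : ∀ a, S a → S' a) :
    ∀ {φ : Form P A}, ModalS S φ → ModalS S' φ := by
  intro φ hφ
  induction hφ with
  | atom p => exact .atom p
  | neg _ ih => exact .neg ih
  | and _ _ ih1 ih2 => exact .and ih1 ih2
  | box ha _ ih => exact .box (h _ ha) ih

lemma modal_ags {φ : Form P A} (h : φ.Modal) : ModalS (· ∈ ags φ) φ := by
  induction h with
  | atom p => exact .atom p
  | neg _ ih => exact .neg (ih.mono (by intro a ha; simpa [ags] using ha))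
  | and _ _ ih1 ih2 =>
      exact .and (ih1.mono (by intro a ha; simp [ags]; exact Or.inl ha))
        (ih2.mono (by intro a ha; simp [ags]; exact Or.inr ha))
  | box a _ ih =>
      exact .box (by simp [ags]) (ih.mono (by intro b hb; simp [ags]; exact Or.inr hb))

/-- Bisimulation relative to an agent set `S`. -/
def IsBisimS (S : A → Prop) (M N : KModel P A) (Z : M.World → N.World → Prop) : Prop :=
  ∀ s s', Z s s' →
    (∀ p, M.V s p ↔ N.V s' p) ∧
    (∀ a, S a → ∀ t, M.R a s t → ∃ t', N.R a s' t' ∧ Z t t') ∧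
    (∀ a, S a → ∀ t', N.R a s' t' → ∃ t, M.R a s t ∧ Z t t')

lemma sat_of_bisimS {S : A → Prop} {M N : KModel P A} {Z : M.World → N.World → Prop}
    (hZ : IsBisimS S M N Z) {φ : Form P A} (hφ : ModalS S φ) :
    ∀ {s : M.World} {s' : N.World}, Z s s' → (Form.sat M s φ ↔ Form.sat N s' φ) := by
  induction hφ with
  | atom p => intro s s' h; have := (hZ s s' h).1 p; simp only [Form.sat]; exact this
  | neg _ ih => intro s s' h; simp only [Form.sat]; exact not_congr (ih h)
  | and _ _ ih1 ih2 => intro s s' h; simp only [Form.sat]; exact and_congr (ih1 h) (ih2 h)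
  | box ha _ ih =>
      intro s s' h
      simp only [Form.sat]
      constructor
      · intro H t' ht'
        obtain ⟨t, ht, hzt⟩ := (hZ s s' h).2.2 _ ha _ ht'
        exact (ih hzt).1 (H t ht)
      · intro H t ht
        obtain ⟨t', ht', hzt⟩ := (hZ s s' h).2.1 _ ha _ ht
        exact (ih hzt).2 (H t' ht')

lemma satList_iff (M : KModel P A) (U : List (Arrow P A)) (a : A) (o o' : ℕ)
    (s s' : M.World) :
    satList M U a o o' s s' ↔
      ∃ ψ ψ', (a, o, ψ, o', ψ') ∈ U ∧ Form.sat M s ψ ∧ Form.sat M s' ψ' := by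
  induction U with
  | nil => simp [satList]
  | cons ar rest ih =>
      obtain ⟨b, o1, ψ, o2, ψ'⟩ := ar
      simp only [satList, ih, List.mem_cons, Prod.mk.injEq]
      constructor
      · rintro (⟨rfl, rfl, rfl, h1, h2⟩ | ⟨ψ0, ψ0', hmem, h1, h2⟩)
        · exact ⟨ψ, ψ', Or.inl (by simp), h1, h2⟩
        · exact ⟨ψ0, ψ0', Or.inr hmem, h1, h2⟩
      · rintro ⟨ψ0, ψ0', (⟨rfl, rfl, rfl, rfl, rfl⟩ | hmem), h1, h2⟩
        · exact Or.inl ⟨rfl, rfl, rfl, h1, h2⟩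
        · exact Or.inr ⟨ψ0, ψ0', hmem, h1, h2⟩

/-- A conjunction built with an arbitrary "seed" formula as the empty conjunction. -/
def myConj (φ0 : Form P A) : List (Form P A) → Form P A
  | [] => .neg (.and φ0 (.neg φ0))
  | ψ :: rest => .and ψ (myConj φ0 rest)

lemma sat_myConj (M : KModel P A) (t : M.World) (φ0 : Form P A) :
    ∀ l : List (Form P A), Form.sat M t (myConj φ0 l) ↔ ∀ ψ ∈ l, Form.sat M t ψ := by
  intro l
  induction l with
  | nil => simp only [myConj, Form.sat]; tauto
  | cons ψ rest ih =>
      simp only [myConj, Form.sat, List.mem_cons]; rw [ih]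
      constructor
      · rintro ⟨h1, h2⟩ ψ0 (rfl | hm)
        · exact h1
        · exact h2 _ hm
      · intro H; exact ⟨H _ (Or.inl rfl), fun ψ0 hm => H _ (Or.inr hm)⟩

lemma sat_upd_iff (M : KModel P A) (s : M.World) (U : List (Arrow P A)) (o : ℕ)
    (φ : Form P A) :
    Form.sat M s (.upd U o φ) ↔ Form.sat (prodModel M U) (s, o) φ := by
  rw [Form.sat]; rfl

/-- for every basic modal formula `φ`, "after all arrow update
models, φ" is equivalent to "after all action models, φ":
`M,s ⊨ [↑]φ` iff `M,s ⊨ [⊗]φ`, for every pointed relational model `(M,s)`. -/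
theorem arbitrary_arrow_iff_arbitrary_action (P A : Type)
    (φ : Form P A) (h : φ.Modal) (M : KModel P A) (s : M.World) :
    (∀ (U : List (Arrow P A)) (o : ℕ), Form.sat M s (.upd U o φ)) ↔
    (∀ (E : AModel P A), Finite E.Action → ∀ e : E.Action, actSat M E s e φ) := by
  classical
  constructor
  · -- arrow updates ⟹ action models
    intro hL E _hfin e hpre
    haveI := Fintype.ofFinite E.Action
    set c : E.Action → ℕ := fun x => (Fintype.equivFin E.Action x : ℕ) with hc
    have hcinj : Function.Injective c := fun x y hxy =>
      (Fintype.equivFin E.Action).injective (Fin.ext hxy)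
    set bot : Form P A := .and φ (.neg φ) with hbotdef
    have hbot : ∀ (N : KModel P A) (t : N.World), ¬ Form.sat N t bot := by
      intro N t ht
      rw [hbotdef] at ht
      simp only [Form.sat] at ht
      exact ht.2 ht.1
    set U : List (Arrow P A) := (ags φ).flatMap (fun a =>
      (Finset.univ.toList (α := E.Action)).flatMap (fun e1 =>
        (Finset.univ.toList (α := E.Action)).map (fun e2 =>
          (a, c e1, (if E.rel a e1 e2 then E.pre e1 else bot), c e2,
            (if E.rel a e1 e2 then E.pre e2 else bot))))) with hUdef
    have hUmem : ∀ (a : A) (o1 o2 : ℕ) (ψ ψ' : Form P A),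
        (a, o1, ψ, o2, ψ') ∈ U ↔ a ∈ ags φ ∧ ∃ e1 e2 : E.Action,
          o1 = c e1 ∧ o2 = c e2 ∧ ψ = (if E.rel a e1 e2 then E.pre e1 else bot) ∧
          ψ' = (if E.rel a e1 e2 then E.pre e2 else bot) := by
      intro a o1 o2 ψ ψ'
      simp only [hUdef, List.mem_flatMap, List.mem_map, Finset.mem_toList,
        Finset.mem_univ, true_and, Prod.mk.injEq]
      constructor
      · rintro ⟨b, hb, e1, e2, rfl, rfl, rfl, rfl, rfl⟩
        exact ⟨hb, e1, e2, rfl, rfl, rfl, rfl⟩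
      · rintro ⟨hb, e1, e2, rfl, rfl, rfl, rfl⟩
        exact ⟨a, hb, e1, e2, rfl, rfl, rfl, rfl, rfl⟩
    set Z : (actProd M E).World → (prodModel M U).World → Prop :=
      fun x y => y.1 = x.1.1 ∧ y.2 = c x.1.2 with hZdef
    have hbis : IsBisimS (· ∈ ags φ) (actProd M E) (prodModel M U) Z := by
      rintro ⟨⟨t, f⟩, hp⟩ ⟨t', n⟩ ⟨h1, h2⟩
      simp only at h1 h2
      subst h1; subst h2
      refine ⟨fun p => Iff.rfl, ?_, ?_⟩
      · rintro a ha ⟨⟨t2, f2⟩, hp2⟩ ⟨hrM, hrE⟩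
        refine ⟨(t2, c f2), ⟨hrM, ?_⟩, rfl, rfl⟩
        rw [satList_iff]
        refine ⟨E.pre f, E.pre f2, ?_, hp, hp2⟩
        rw [hUmem]
        exact ⟨ha, f, f2, rfl, rfl, by rw [if_pos hrE], by rw [if_pos hrE]⟩
      · rintro a ha ⟨t2, n2⟩ ⟨hrM, hsl⟩
        rw [satList_iff] at hsl
        obtain ⟨ψ, ψ', hmem, hψ, hψ'⟩ := hsl
        rw [hUmem] at hmem
        obtain ⟨-, e1, e2, he1, he2, hψd, hψ'd⟩ := hmem
        have he1f : e1 = f := hcinj he1.symm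
        subst he1f
        by_cases hrel : E.rel a e1 e2
        · rw [if_pos hrel] at hψ'd
          subst hψ'd
          exact ⟨⟨(t2, e2), hψ'⟩, ⟨hrM, hrel⟩, rfl, he2⟩
        · rw [if_neg hrel] at hψd
          subst hψd
          exact absurd hψ (hbot M _)
    have h2 := hL U (c e)
    rw [sat_upd_iff] at h2
    exact (sat_of_bisimS hbis (modal_ags h) ⟨rfl, rfl⟩).2 h2
  · -- action models ⟹ arrow updates
    intro hR U o
    rw [sat_upd_iff]
    set C : List (Form P A) :=
      U.map (fun ar => ar.2.2.1) ++ U.map (fun ar => ar.2.2.2.2) with hCdef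
    set L : List ℕ := o :: (U.map (fun ar => ar.2.1) ++ U.map (fun ar => ar.2.2.2.1))
      with hLdef
    have hCU : C.length = U.length + U.length := by simp [hCdef]
    have hjS : ∀ j : Fin U.length, (j : ℕ) < C.length := by
      intro j; rw [hCU]; omega
    have hjT : ∀ j : Fin U.length, U.length + (j : ℕ) < C.length := by
      intro j; rw [hCU]; omega
    have hgetS : ∀ j : Fin U.length, C.get ⟨j, hjS j⟩ = (U.get j).2.2.1 := by
      intro j
      show (U.map (fun ar => ar.2.2.1) ++ U.map (fun ar => ar.2.2.2.2))[(j : ℕ)]'_ = _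
      rw [List.getElem_append_left (by simpa using j.2)]
      rw [List.getElem_map]
      rfl
    have hgetT : ∀ j : Fin U.length, C.get ⟨U.length + j, hjT j⟩ = (U.get j).2.2.2.2 := by
      intro j
      show (U.map (fun ar => ar.2.2.1) ++ U.map (fun ar => ar.2.2.2.2))[U.length + (j : ℕ)]'_
        = _
      rw [List.getElem_append_right (by simp [List.length_map])]
      have : U.length + (j : ℕ) - (U.map (fun ar => ar.2.2.1)).length = (j : ℕ) := by
        simp [List.length_map]
      simp only [this, List.getElem_map]
      rfl
    -- the action model
    set E : AModel P A := ⟨Fin L.length × (Fin C.length → Bool),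
      fun a x y => ∃ j : Fin U.length, (U.get j).1 = a ∧ (U.get j).2.1 = L.get x.1 ∧
        (U.get j).2.2.2.1 = L.get y.1 ∧ x.2 ⟨j, hjS j⟩ = true ∧
        y.2 ⟨U.length + j, hjT j⟩ = true,
      fun x => myConj φ ((List.finRange C.length).map
        (fun j => if x.2 j then C.get j else .neg (C.get j)))⟩ with hEdef
    have hpre_iff : ∀ (t : M.World) (x : E.Action),
        Form.sat M t (E.pre x) ↔ ∀ j, (x.2 j = true ↔ Form.sat M t (C.get j)) := by
      intro t x
      show Form.sat M t (myConj φ _) ↔ _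
      rw [sat_myConj]
      have key : ∀ j : Fin C.length,
          Form.sat M t (if x.2 j = true then C.get j else .neg (C.get j)) ↔
            (x.2 j = true ↔ Form.sat M t (C.get j)) := by
        intro j
        by_cases hb : x.2 j = true
        · rw [if_pos hb]
          exact ⟨fun hs => ⟨fun _ => hs, fun _ => hb⟩, fun H => H.1 hb⟩
        · rw [if_neg hb]
          simp only [Form.sat]
          exact ⟨fun hn => ⟨fun hbt => absurd hbt hb, fun hs => absurd hs hn⟩,
            fun H hs => hb (H.2 hs)⟩
      constructor
      · intro H j
        exact (key j).1 (H _ (List.mem_map.2 ⟨j, List.mem_finRange j, rfl⟩))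
      · intro H ψ hψ
        obtain ⟨j, -, rfl⟩ := List.mem_map.1 hψ
        exact (key j).2 (H j)
    have hzero : (0 : ℕ) < L.length := by rw [hLdef]; simp
    set e₀ : E.Action := (⟨0, hzero⟩, fun j => decide (Form.sat M s (C.get j))) with he₀
    have hpre₀ : Form.sat M s (E.pre e₀) := by
      rw [hpre_iff]
      intro j
      simp [he₀]
    have hfinE : Finite E.Action := by rw [hEdef]; infer_instance
    have hsat := hR E hfinE e₀ hpre₀
    set Z : (actProd M E).World → (prodModel M U).World → Prop :=
      fun x y => y.1 = x.1.1 ∧ y.2 = L.get x.1.2.1 with hZdef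
    have hbis : IsBisimS (fun _ => True) (actProd M E) (prodModel M U) Z := by
      rintro ⟨⟨t, i, v⟩, hp⟩ ⟨t', n⟩ ⟨h1, h2⟩
      simp only at h1 h2
      subst h1; subst h2
      refine ⟨fun p => Iff.rfl, ?_, ?_⟩
      · rintro a - ⟨⟨t2, i2, v2⟩, hp2⟩ ⟨hrM, j, hja, hjs, hjt, hvS, hvT⟩
        refine ⟨(t2, L.get i2), ⟨hrM, ?_⟩, rfl, rfl⟩
        rw [satList_iff]
        refine ⟨(U.get j).2.2.1, (U.get j).2.2.2.2, ?_, ?_, ?_⟩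
        · have : (a, L.get i, (U.get j).2.2.1, L.get i2, (U.get j).2.2.2.2)
              = U.get j := by rw [← hja, ← hjs, ← hjt]
          rw [this]
          exact List.get_mem U j
        · rw [← hgetS j]
          exact ((hpre_iff _ (i, v)).1 hp ⟨j, hjS j⟩).1 hvS
        · rw [← hgetT j]
          exact ((hpre_iff _ (i2, v2)).1 hp2 ⟨U.length + j, hjT j⟩).1 hvT
      · rintro a - ⟨t2, n2⟩ ⟨hrM, hsl⟩
        rw [satList_iff] at hsl
        obtain ⟨ψ, ψ', hmem, hψ, hψ'⟩ := hsl
        obtain ⟨j, hj⟩ := List.mem_iff_get.1 hmem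
        have hn2L : n2 ∈ L := by
          rw [hLdef]
          refine List.mem_cons_of_mem _ (List.mem_append_right _ ?_)
          refine List.mem_map.2 ⟨U.get j, List.get_mem U j, ?_⟩
          rw [hj]
        obtain ⟨i2, hi2⟩ := List.mem_iff_get.1 hn2L
        set v2 : Fin C.length → Bool := fun k => decide (Form.sat M t2 (C.get k))
          with hv2
        have hp2 : Form.sat M t2 (E.pre (i2, v2)) := by
          rw [hpre_iff]; intro k; simp [hv2]
        refine ⟨⟨(t2, i2, v2), hp2⟩, ⟨hrM, j, ?_, ?_, ?_, ?_, ?_⟩, rfl, hi2.symm⟩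
        · rw [hj]
        · rw [hj]
        · rw [hj]; exact hi2.symm
        · exact ((hpre_iff _ (i, v)).1 hp ⟨j, hjS j⟩).2 (by rw [hgetS j, hj]; exact hψ)
        · show decide (Form.sat M t2 (C.get ⟨U.length + ↑j, hjT j⟩)) = true
          rw [decide_eq_true_eq, hgetT j, hj]
          exact hψ'
    have hZ0 : Z ⟨(s, e₀), hpre₀⟩ (s, o) := ⟨rfl, rfl⟩
    exact (sat_of_bisimS hbis ((modal_ags h).mono (fun _ _ => trivial)) hZ0).1 hsat

end AAUML
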